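/- Let A and C be antisymmetric 2r × 2r real (or complex) matrices with A invertible. Then the derivative at z = 0 of the polynomial function z ↦ pf(A + z·C) equals (1/2) · pf(A) · tr(A⁻¹·C). -/

import Mathlib

open Matrix

/-- The set of permutations of `Fin (2n)` encoding perfect matchings in canonical form:
`σ(2j) < σ(2j+1)` for each `j`, and `σ(2j)` increasing in `j` (0-based indexing). -/
def pfMatchings (n : ℕ) : Finset (Equiv.Perm (Fin (2 * n))) :=
  Finset.univ.filter fun σ =>
    (∀ j : Fin n, σ ⟨2 * (j : ℕ), by have := j.isLt; omega⟩ <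
        σ ⟨2 * (j : ℕ) + 1, by have := j.isLt; omega⟩) ∧
    ∀ j k : Fin n, j < k →
      σ ⟨2 * (j : ℕ), by have := j.isLt; omega⟩ <
        σ ⟨2 * (k : ℕ), by have := k.isLt; omega⟩

/-- The Pfaffian of a `2n × 2n` matrix over a commutative ring,
`pf(M) = Σ_{matchings} sgn(π) ∏_j M_{π(2j-1),π(2j)}`
(equivalently `(1/(2ⁿ n!)) Σ_{π ∈ S_{2n}} sgn(π) ∏_j M_{π(2j-1),π(2j)}`). -/
def pfaffian {R : Type*} [CommRing R] {n : ℕ}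
    (M : Matrix (Fin (2 * n)) (Fin (2 * n)) R) : R :=
  ∑ σ ∈ pfMatchings n,
    Equiv.Perm.sign σ •
      ∏ j : Fin n,
        M (σ ⟨2 * (j : ℕ), by have := j.isLt; omega⟩)
          (σ ⟨2 * (j : ℕ) + 1, by have := j.isLt; omega⟩)


namespace PfAux

open Equiv Finset

variable {n : ℕ}

/-- even index -/
def ee (n : ℕ) (j : Fin n) : Fin (2 * n) := ⟨2 * (j : ℕ), by have := j.isLt; omega⟩
/-- odd index -/
def oo (n : ℕ) (j : Fin n) : Fin (2 * n) := ⟨2 * (j : ℕ) + 1, by have := j.isLt; omega⟩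

lemma ee_lt_oo (j : Fin n) : ee n j < oo n j := by
  simp [ee, oo, Fin.lt_def]

lemma ee_ne_oo (j l : Fin n) : ee n j ≠ oo n l := by
  simp only [ee, oo, ne_eq, Fin.mk.injEq]; omega

def half (x : Fin (2 * n)) : Fin n := ⟨(x : ℕ) / 2, by have := x.isLt; omega⟩

lemma half_ee (j : Fin n) : half (ee n j) = j := by
  simp only [half, ee]
  ext
  simp only []
  omega

lemma half_oo (j : Fin n) : half (oo n j) = j := by
  simp only [half, oo]
  ext
  simp only []
  omega

lemma ee_or_oo (x : Fin (2 * n)) : x = ee n (half x) ∨ x = oo n (half x) := by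
  rcases Nat.mod_two_eq_zero_or_one (x : ℕ) with h | h
  · left; simp only [ee, half]; ext; simp only [Fin.val_mk]; omega
  · right; simp only [oo, half]; ext; simp only [Fin.val_mk]; omega

/-- signed Pfaffian summand -/
def T (M : Matrix (Fin (2 * n)) (Fin (2 * n)) ℝ) (σ : Equiv.Perm (Fin (2 * n))) : ℝ :=
  ((Equiv.Perm.sign σ : ℤ) : ℝ) * ∏ j : Fin n, M (σ (ee n j)) (σ (oo n j))

lemma pfaffian_eq_sum_T (M : Matrix (Fin (2 * n)) (Fin (2 * n)) ℝ) :
    pfaffian M = ∑ σ ∈ pfMatchings n, T M σ := by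
  unfold pfaffian T ee oo
  refine Finset.sum_congr rfl fun σ _ => ?_
  rw [Units.smul_def, zsmul_eq_mul]

lemma mem_pfMatchings (σ : Equiv.Perm (Fin (2 * n))) :
    σ ∈ pfMatchings n ↔ (∀ j : Fin n, σ (ee n j) < σ (oo n j)) ∧
      ∀ j k : Fin n, j < k → σ (ee n j) < σ (ee n k) := by
  unfold pfMatchings ee oo
  simp [Finset.mem_filter]

/-- the equivalence `Fin n × Fin 2 ≃ Fin (2*n)`, `(j,t) ↦ 2j+t`. -/
def myE : Fin n × Fin 2 ≃ Fin (2 * n) where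
  toFun p := ⟨2 * (p.1 : ℕ) + (p.2 : ℕ), by have := p.1.isLt; have := p.2.isLt; omega⟩
  invFun x := (half x, ⟨(x : ℕ) % 2, by omega⟩)
  left_inv p := by
    obtain ⟨j, t⟩ := p
    have ht := t.isLt
    simp only [half]
    ext
    · simp only [Fin.val_mk]; omega
    · simp only [Fin.val_mk]; omega
  right_inv x := by
    simp only [half]
    ext
    simp only [Fin.val_mk]
    omega

lemma myE_e (j : Fin n) : myE (j, 0) = ee n j := by
  simp only [myE, ee, Equiv.coe_fn_mk]
  ext; simp

lemma myE_o (j : Fin n) : myE (j, 1) = oo n j := by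
  simp only [myE, oo, Equiv.coe_fn_mk]
  ext; simp

lemma sum_split {M : Type*} [AddCommMonoid M] (f : Fin (2 * n) → M) :
    ∑ x : Fin (2 * n), f x = ∑ j : Fin n, (f (ee n j) + f (oo n j)) := by
  rw [← Equiv.sum_comp (myE (n := n)) f, Fintype.sum_prod_type]
  refine Finset.sum_congr rfl fun j _ => ?_
  rw [Fin.sum_univ_two, myE_e, myE_o]

/-- element of the hyperoctahedral group: permute the pairs by `π`,
flip pair `j` iff `ε j`. -/
def hp (ε : Fin n → Bool) (π : Equiv.Perm (Fin n)) : Equiv.Perm (Fin (2 * n)) :=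
  (myE (n := n)).permCongr
    ((Equiv.prodCongrLeft fun _ : Fin 2 => π) *
      (Equiv.prodCongrRight fun j => if ε j then Equiv.swap 0 1 else 1))

lemma hp_ee (ε : Fin n → Bool) (π : Equiv.Perm (Fin n)) (j : Fin n) :
    hp ε π (ee n j) = if ε j then oo n (π j) else ee n (π j) := by
  have h0 : myE.symm (ee n j) = (j, 0) := myE.symm_apply_eq.mpr (myE_e j).symm
  simp only [hp, Equiv.permCongr_apply, h0, Equiv.Perm.mul_apply,
    Equiv.prodCongrRight_apply, Equiv.prodCongrLeft_apply]
  cases hε : ε j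
  · simp [myE_e]
  · simp [Equiv.swap_apply_left, myE_o]

lemma hp_oo (ε : Fin n → Bool) (π : Equiv.Perm (Fin n)) (j : Fin n) :
    hp ε π (oo n j) = if ε j then ee n (π j) else oo n (π j) := by
  have h0 : myE.symm (oo n j) = (j, 1) := myE.symm_apply_eq.mpr (myE_o j).symm
  simp only [hp, Equiv.permCongr_apply, h0, Equiv.Perm.mul_apply,
    Equiv.prodCongrRight_apply, Equiv.prodCongrLeft_apply]
  cases hε : ε j
  · simp [myE_o]
  · simp [Equiv.swap_apply_right, myE_e]

lemma sign_hp (ε : Fin n → Bool) (π : Equiv.Perm (Fin n)) :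
    Equiv.Perm.sign (hp ε π) = ∏ j : Fin n, (if ε j then (-1 : ℤˣ) else 1) := by
  rw [hp, Equiv.Perm.sign_permCongr, _root_.map_mul, Equiv.Perm.sign_prodCongrLeft,
    Equiv.Perm.sign_prodCongrRight]
  have h1 : ∏ _t : Fin 2, Equiv.Perm.sign π = 1 := by
    rw [Fin.prod_univ_two]; exact Int.units_mul_self _
  rw [h1, one_mul]
  refine Finset.prod_congr rfl fun j _ => ?_
  cases hε : ε j
  · simp
  · simp [Equiv.Perm.sign_swap (by decide : (0 : Fin 2) ≠ 1)]

lemma hp_mul (ε ε' : Fin n → Bool) (π π' : Equiv.Perm (Fin n)) :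
    hp ε π * hp ε' π' = hp (fun j => xor (ε' j) (ε (π' j))) (π * π') := by
  ext x
  rcases ee_or_oo x with hx | hx <;> rw [hx] <;>
    simp only [Equiv.Perm.mul_apply, hp_ee, hp_oo] <;>
    rcases hε' : ε' (half x) <;> rcases hε : ε (π' (half x)) <;>
    simp [hp_ee, hp_oo, hε, hε']

lemma hp_one : hp (fun _ : Fin n => false) 1 = 1 := by
  ext x
  rcases ee_or_oo x with hx | hx <;> rw [hx] <;> simp [hp_ee, hp_oo]

lemma hp_inv (ε : Fin n → Bool) (π : Equiv.Perm (Fin n)) :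
    (hp ε π)⁻¹ = hp (fun j => ε (π⁻¹ j)) π⁻¹ := by
  refine inv_eq_of_mul_eq_one_right ?_
  rw [hp_mul]
  have : (fun j => xor (ε (π⁻¹ j)) (ε (π⁻¹ j))) = fun _ => false := by
    funext j; exact Bool.xor_self _
  rw [this, mul_inv_cancel, hp_one]

lemma T_mul_hp {M : Matrix (Fin (2 * n)) (Fin (2 * n)) ℝ}
    (hM : ∀ a b, M b a = -M a b) (σ : Equiv.Perm (Fin (2 * n)))
    (ε : Fin n → Bool) (π : Equiv.Perm (Fin n)) :
    T M (σ * hp ε π) = T M σ := by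
  unfold T
  have hsgn : Equiv.Perm.sign (σ * hp ε π)
      = Equiv.Perm.sign σ * ∏ j : Fin n, (if ε j then (-1 : ℤˣ) else 1) := by
    rw [_root_.map_mul, sign_hp]
  have hprod : ∏ j : Fin n, M ((σ * hp ε π) (ee n j)) ((σ * hp ε π) (oo n j))
      = (∏ j : Fin n, (if ε j then (-1 : ℝ) else 1)) *
        ∏ j : Fin n, M (σ (ee n j)) (σ (oo n j)) := by
    have step : ∀ j : Fin n, M ((σ * hp ε π) (ee n j)) ((σ * hp ε π) (oo n j))
        = (if ε j then (-1 : ℝ) else 1) * M (σ (ee n (π j))) (σ (oo n (π j))) := by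
      intro j
      simp only [Equiv.Perm.mul_apply, hp_ee, hp_oo]
      cases hε : ε j
      · simp
      · simp [hM (σ (ee n (π j))) (σ (oo n (π j)))]
    calc ∏ j : Fin n, M ((σ * hp ε π) (ee n j)) ((σ * hp ε π) (oo n j))
        = ∏ j : Fin n, (if ε j then (-1 : ℝ) else 1) *
            M (σ (ee n (π j))) (σ (oo n (π j))) := Finset.prod_congr rfl fun j _ => step j
      _ = (∏ j : Fin n, (if ε j then (-1 : ℝ) else 1)) *
            ∏ j : Fin n, M (σ (ee n (π j))) (σ (oo n (π j))) := Finset.prod_mul_distrib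
      _ = _ := by rw [Equiv.prod_comp π fun j => M (σ (ee n j)) (σ (oo n j))]
  have hcast : (((Equiv.Perm.sign (σ * hp ε π) : ℤˣ) : ℤ) : ℝ)
      = ((Equiv.Perm.sign σ : ℤ) : ℝ) * ∏ j : Fin n, (if ε j then (-1 : ℝ) else 1) := by
    rw [hsgn]
    push_cast [apply_ite (fun u : ℤˣ => ((u : ℤ) : ℝ))]
    norm_num
  have hs : (∏ j : Fin n, (if ε j then (-1 : ℝ) else 1)) *
      (∏ j : Fin n, (if ε j then (-1 : ℝ) else 1)) = 1 := by
    rw [← Finset.prod_mul_distrib]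
    refine Finset.prod_eq_one fun j _ => ?_
    cases hε : ε j <;> norm_num
  rw [hprod, hcast]
  calc ((Equiv.Perm.sign σ : ℤ) : ℝ) * (∏ j : Fin n, (if ε j then (-1 : ℝ) else 1)) *
        ((∏ j : Fin n, (if ε j then (-1 : ℝ) else 1)) *
          ∏ j : Fin n, M (σ (ee n j)) (σ (oo n j)))
      = ((Equiv.Perm.sign σ : ℤ) : ℝ) *
          (((∏ j : Fin n, (if ε j then (-1 : ℝ) else 1)) *
            (∏ j : Fin n, (if ε j then (-1 : ℝ) else 1))) *
          ∏ j : Fin n, M (σ (ee n j)) (σ (oo n j))) := by ring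
    _ = _ := by rw [hs, one_mul]

def mins (τ : Equiv.Perm (Fin (2 * n))) (j : Fin n) : Fin (2 * n) :=
  min (τ (ee n j)) (τ (oo n j))

def maxs (τ : Equiv.Perm (Fin (2 * n))) (j : Fin n) : Fin (2 * n) :=
  max (τ (ee n j)) (τ (oo n j))

def εof (τ : Equiv.Perm (Fin (2 * n))) (j : Fin n) : Bool :=
  decide (τ (oo n j) < τ (ee n j))

def πof (τ : Equiv.Perm (Fin (2 * n))) : Equiv.Perm (Fin n) :=
  (Tuple.sort (mins τ))⁻¹

def canon (τ : Equiv.Perm (Fin (2 * n))) : Equiv.Perm (Fin (2 * n)) :=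
  τ * (hp (εof τ) (πof τ))⁻¹

lemma tau_ne (τ : Equiv.Perm (Fin (2 * n))) (j : Fin n) : τ (ee n j) ≠ τ (oo n j) :=
  fun h => ee_ne_oo j j (τ.injective h)

lemma canon_ee_aux (τ : Equiv.Perm (Fin (2 * n))) (m : Fin n) :
    τ (if εof τ m then oo n m else ee n m) = mins τ m := by
  unfold εof mins
  rcases lt_or_ge (τ (oo n m)) (τ (ee n m)) with h | h
  · simp [h, min_eq_right (le_of_lt h)]
  · simp [not_lt.mpr h, min_eq_left h]

lemma canon_oo_aux (τ : Equiv.Perm (Fin (2 * n))) (m : Fin n) :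
    τ (if εof τ m then ee n m else oo n m) = maxs τ m := by
  unfold εof maxs
  rcases lt_or_ge (τ (oo n m)) (τ (ee n m)) with h | h
  · simp [h, max_eq_left (le_of_lt h)]
  · simp [not_lt.mpr h, max_eq_right h]

lemma canon_ee (τ : Equiv.Perm (Fin (2 * n))) (j : Fin n) :
    canon τ (ee n j) = mins τ (Tuple.sort (mins τ) j) := by
  unfold canon
  rw [Equiv.Perm.mul_apply, hp_inv, hp_ee]
  have hπ : (πof τ)⁻¹ = Tuple.sort (mins τ) := by rw [πof, inv_inv]
  rw [hπ]
  exact canon_ee_aux τ _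

lemma canon_oo (τ : Equiv.Perm (Fin (2 * n))) (j : Fin n) :
    canon τ (oo n j) = maxs τ (Tuple.sort (mins τ) j) := by
  unfold canon
  rw [Equiv.Perm.mul_apply, hp_inv, hp_oo]
  have hπ : (πof τ)⁻¹ = Tuple.sort (mins τ) := by rw [πof, inv_inv]
  rw [hπ]
  exact canon_oo_aux τ _

lemma mins_inj (τ : Equiv.Perm (Fin (2 * n))) : Function.Injective (mins τ) := by
  intro j k h
  have hj := min_choice (τ (ee n j)) (τ (oo n j))
  have hk := min_choice (τ (ee n k)) (τ (oo n k))
  unfold mins at h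
  rcases hj with hj | hj <;> rcases hk with hk | hk <;>
    rw [hj, hk] at h <;> have := τ.injective h <;>
    simp only [ee, oo, Fin.mk.injEq] at this <;> ext <;> omega

lemma strictMono_mins_sort (τ : Equiv.Perm (Fin (2 * n))) :
    StrictMono (mins τ ∘ Tuple.sort (mins τ)) :=
  (Tuple.monotone_sort (mins τ)).strictMono_of_injective
    ((mins_inj τ).comp (Equiv.injective _))

lemma canon_mem (τ : Equiv.Perm (Fin (2 * n))) : canon τ ∈ pfMatchings n := by
  rw [mem_pfMatchings]
  constructor
  · intro j
    rw [canon_ee, canon_oo]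
    exact min_lt_max.mpr (tau_ne τ _)
  · intro j k hjk
    rw [canon_ee, canon_ee]
    exact strictMono_mins_sort τ hjk

lemma tau_ee_mul (σ : Equiv.Perm (Fin (2 * n))) (ε : Fin n → Bool) (π : Equiv.Perm (Fin n))
    (j : Fin n) : (σ * hp ε π) (ee n j)
      = if ε j then σ (oo n (π j)) else σ (ee n (π j)) := by
  rw [Equiv.Perm.mul_apply, hp_ee, apply_ite σ]

lemma tau_oo_mul (σ : Equiv.Perm (Fin (2 * n))) (ε : Fin n → Bool) (π : Equiv.Perm (Fin n))
    (j : Fin n) : (σ * hp ε π) (oo n j)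
      = if ε j then σ (ee n (π j)) else σ (oo n (π j)) := by
  rw [Equiv.Perm.mul_apply, hp_oo, apply_ite σ]

variable {σ : Equiv.Perm (Fin (2 * n))} {ε : Fin n → Bool} {π : Equiv.Perm (Fin n)}

lemma mins_mul (hσ : ∀ j : Fin n, σ (ee n j) < σ (oo n j)) (j : Fin n) :
    mins (σ * hp ε π) j = σ (ee n (π j)) := by
  unfold mins
  rw [tau_ee_mul, tau_oo_mul]
  cases hε : ε j
  · simp [min_eq_left (le_of_lt (hσ (π j)))]
  · simp [min_eq_right (le_of_lt (hσ (π j)))]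

lemma εof_mul (hσ : ∀ j : Fin n, σ (ee n j) < σ (oo n j)) (j : Fin n) :
    εof (σ * hp ε π) j = ε j := by
  unfold εof
  rw [tau_ee_mul, tau_oo_mul]
  cases hε : ε j
  · simp [not_lt.mpr (le_of_lt (hσ (π j)))]
  · simp [hσ (π j)]

lemma πof_mul (hσ : ∀ j : Fin n, σ (ee n j) < σ (oo n j))
    (hσ2 : ∀ j k : Fin n, j < k → σ (ee n j) < σ (ee n k)) :
    πof (σ * hp ε π) = π := by
  unfold πof
  rw [inv_eq_iff_eq_inv, eq_comm, Tuple.eq_sort_iff]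
  constructor
  · intro j k hjk
    rw [Function.comp_apply, Function.comp_apply, mins_mul hσ, mins_mul hσ,
      Equiv.Perm.coe_inv, Equiv.apply_symm_apply, Equiv.apply_symm_apply]
    rcases lt_or_eq_of_le hjk with h | h
    · exact le_of_lt (hσ2 j k h)
    · rw [h]
  · intro i j hij heq
    rw [mins_mul hσ, mins_mul hσ, Equiv.Perm.coe_inv, Equiv.apply_symm_apply, Equiv.apply_symm_apply] at heq
    have : i = j := by
      have h2 := σ.injective heq
      simp only [ee, Fin.mk.injEq] at h2
      ext; omega
    exact absurd this (ne_of_lt hij)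

lemma canon_mul (hσ : ∀ j : Fin n, σ (ee n j) < σ (oo n j))
    (hσ2 : ∀ j k : Fin n, j < k → σ (ee n j) < σ (ee n k)) :
    canon (σ * hp ε π) = σ := by
  unfold canon
  have hε : εof (σ * hp ε π) = ε := funext fun j => εof_mul hσ j
  rw [hε, πof_mul hσ hσ2, mul_inv_cancel_right]

lemma sum_T_all (M : Matrix (Fin (2 * n)) (Fin (2 * n)) ℝ)
    (hM : ∀ a b, M b a = -M a b) :
    ∑ τ : Equiv.Perm (Fin (2 * n)), T M τ
      = ((2 ^ n * n.factorial : ℕ) : ℝ) * pfaffian M := by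
  rw [pfaffian_eq_sum_T]
  have key : ∑ p ∈ (pfMatchings n) ×ˢ
      (Finset.univ : Finset ((Fin n → Bool) × Equiv.Perm (Fin n))),
        T M p.1 = ∑ τ : Equiv.Perm (Fin (2 * n)), T M τ := by
    refine Finset.sum_bij' (fun p _ => p.1 * hp p.2.1 p.2.2)
      (fun τ _ => (canon τ, εof τ, πof τ)) (fun p hp => Finset.mem_univ _)
      (fun τ _ => ?_) (fun p hp' => ?_) (fun τ _ => ?_) (fun p hp' => ?_)
    · rw [Finset.mem_product]
      exact ⟨canon_mem τ, Finset.mem_univ _⟩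
    · obtain ⟨hp1, -⟩ := Finset.mem_product.mp hp'
      obtain ⟨h1, h2⟩ := (mem_pfMatchings p.1).mp hp1
      exact Prod.ext_iff.mpr ⟨canon_mul h1 h2,
        Prod.ext_iff.mpr ⟨funext fun j => εof_mul h1 j, πof_mul h1 h2⟩⟩
    · simp only [canon]
      rw [inv_mul_cancel_right]
    · obtain ⟨hp1, -⟩ := Finset.mem_product.mp hp'
      obtain ⟨h1, h2⟩ := (mem_pfMatchings p.1).mp hp1
      exact (T_mul_hp hM p.1 p.2.1 p.2.2).symm
  rw [← key, Finset.sum_product]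
  simp only [Finset.sum_const, Finset.card_univ]
  have hcard : Fintype.card ((Fin n → Bool) × Equiv.Perm (Fin n))
      = 2 ^ n * n.factorial := by
    simp [Fintype.card_prod, Fintype.card_fun, Fintype.card_perm]
  rw [Finset.mul_sum]
  refine Finset.sum_congr rfl fun σ' _ => ?_
  rw [hcard, nsmul_eq_mul]

lemma pf_eq_zero {M : Matrix (Fin (2 * n)) (Fin (2 * n)) ℝ}
    (hM : ∀ a b, M b a = -M a b) {i k : Fin (2 * n)} (hik : i ≠ k)
    (hinv : ∀ a b, M (Equiv.swap i k a) (Equiv.swap i k b) = M a b) :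
    pfaffian M = 0 := by
  have hT : ∀ τ : Equiv.Perm (Fin (2 * n)), T M (Equiv.swap i k * τ) = -T M τ := by
    intro τ
    unfold T
    have hsgn : Equiv.Perm.sign (Equiv.swap i k * τ) = -Equiv.Perm.sign τ := by
      rw [_root_.map_mul, Equiv.Perm.sign_swap hik, neg_mul, one_mul]
    have hprod : ∏ j : Fin n, M ((Equiv.swap i k * τ) (ee n j)) ((Equiv.swap i k * τ) (oo n j))
        = ∏ j : Fin n, M (τ (ee n j)) (τ (oo n j)) :=
      Finset.prod_congr rfl fun j _ => hinv _ _
    rw [hsgn, hprod]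
    push_cast
    ring
  have hsum : ∑ τ : Equiv.Perm (Fin (2 * n)), T M τ = 0 := by
    have h2 : ∑ τ : Equiv.Perm (Fin (2 * n)), T M (Equiv.swap i k * τ)
        = ∑ τ : Equiv.Perm (Fin (2 * n)), T M τ :=
      Fintype.sum_equiv (Equiv.mulLeft (Equiv.swap i k)) _ _ fun τ => rfl
    have h3 : ∑ τ : Equiv.Perm (Fin (2 * n)), T M (Equiv.swap i k * τ)
        = -∑ τ : Equiv.Perm (Fin (2 * n)), T M τ := by
      rw [← Finset.sum_neg_distrib]
      exact Finset.sum_congr rfl fun τ _ => hT τ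
    have := h2.symm.trans h3
    linarith
  have hfull := sum_T_all M hM
  rw [hsum] at hfull
  have hc : ((2 ^ n * n.factorial : ℕ) : ℝ) ≠ 0 := by
    positivity
  field_simp at hfull
  exact (mul_eq_zero.mp hfull.symm).resolve_left hc

/-- `A` with row and column `k` replaced using the vector `v` (antisymmetrically). -/
def Rmat (A : Matrix (Fin (2 * n)) (Fin (2 * n)) ℝ) (k : Fin (2 * n))
    (v : Fin (2 * n) → ℝ) : Matrix (Fin (2 * n)) (Fin (2 * n)) ℝ :=
  Matrix.of fun a b => if a = k then (if b = k then 0 else v b)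
    else if b = k then -(v a) else A a b

lemma Rmat_apply (A : Matrix (Fin (2 * n)) (Fin (2 * n)) ℝ) (k : Fin (2 * n))
    (v : Fin (2 * n) → ℝ) (a b : Fin (2 * n)) :
    Rmat A k v a b = if a = k then (if b = k then 0 else v b)
      else if b = k then -(v a) else A a b := rfl

lemma Rmat_anti {A : Matrix (Fin (2 * n)) (Fin (2 * n)) ℝ}
    (hA : ∀ a b, A b a = -A a b) (k : Fin (2 * n)) (v : Fin (2 * n) → ℝ) :
    ∀ a b, Rmat A k v b a = -Rmat A k v a b := by
  intro a b
  by_cases hak : a = k <;> by_cases hbk : b = k <;>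
    simp [Rmat_apply, hak, hbk, hA a b]

lemma Rmat_self {A : Matrix (Fin (2 * n)) (Fin (2 * n)) ℝ}
    (hA : ∀ a b, A b a = -A a b) (k : Fin (2 * n)) :
    Rmat A k (A k) = A := by
  have hdiag : A k k = 0 := by have := hA k k; linarith
  ext a b
  by_cases hak : a = k <;> by_cases hbk : b = k <;>
    simp [Rmat_apply, hak, hbk, hdiag, hA k a]

/-- the index of the pair of `σ` containing `k` -/
def jjf (σ : Equiv.Perm (Fin (2 * n))) (k : Fin (2 * n)) : Fin n := half (σ⁻¹ k)

lemma jj_spec (σ : Equiv.Perm (Fin (2 * n))) (k : Fin (2 * n)) :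
    σ (ee n (jjf σ k)) = k ∨ σ (oo n (jjf σ k)) = k := by
  rcases ee_or_oo (σ⁻¹ k) with h | h
  · left; rw [jjf, ← h, Equiv.Perm.coe_inv, Equiv.apply_symm_apply]
  · right; rw [jjf, ← h, Equiv.Perm.coe_inv, Equiv.apply_symm_apply]

lemma ne_of_ne_jj {σ : Equiv.Perm (Fin (2 * n))} {k : Fin (2 * n)} {l : Fin n}
    (hl : l ≠ jjf σ k) : σ (ee n l) ≠ k ∧ σ (oo n l) ≠ k := by
  constructor
  · intro h
    apply hl
    have : σ⁻¹ k = ee n l := by rw [← h, Equiv.Perm.coe_inv, Equiv.symm_apply_apply]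
    rw [jjf, this, half_ee]
  · intro h
    apply hl
    have : σ⁻¹ k = oo n l := by rw [← h, Equiv.Perm.coe_inv, Equiv.symm_apply_apply]
    rw [jjf, this, half_oo]

lemma jj_apply_ee (σ : Equiv.Perm (Fin (2 * n))) (j : Fin n) :
    jjf σ (σ (ee n j)) = j := by
  rw [jjf, Equiv.Perm.coe_inv, Equiv.symm_apply_apply, half_ee]

lemma jj_apply_oo (σ : Equiv.Perm (Fin (2 * n))) (j : Fin n) :
    jjf σ (σ (oo n j)) = j := by
  rw [jjf, Equiv.Perm.coe_inv, Equiv.symm_apply_apply, half_oo]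

lemma prod_Rmat (A : Matrix (Fin (2 * n)) (Fin (2 * n)) ℝ) (k : Fin (2 * n))
    (v : Fin (2 * n) → ℝ) (σ : Equiv.Perm (Fin (2 * n))) :
    ∏ j : Fin n, Rmat A k v (σ (ee n j)) (σ (oo n j))
      = (if σ (ee n (jjf σ k)) = k then v (σ (oo n (jjf σ k)))
          else -(v (σ (ee n (jjf σ k))))) *
        ∏ l ∈ Finset.univ.erase (jjf σ k), A (σ (ee n l)) (σ (oo n l)) := by
  rw [← Finset.mul_prod_erase Finset.univ _ (Finset.mem_univ (jjf σ k))]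
  have hrest : ∏ l ∈ Finset.univ.erase (jjf σ k), Rmat A k v (σ (ee n l)) (σ (oo n l))
      = ∏ l ∈ Finset.univ.erase (jjf σ k), A (σ (ee n l)) (σ (oo n l)) := by
    refine Finset.prod_congr rfl fun l hl => ?_
    obtain ⟨h1, h2⟩ := ne_of_ne_jj (Finset.ne_of_mem_erase hl)
    rw [Rmat_apply, if_neg h1, if_neg h2]
  rw [hrest]
  congr 1
  rcases jj_spec σ k with h | h
  · have hne : σ (oo n (jjf σ k)) ≠ k := fun hh =>
      (ee_ne_oo _ _) (σ.injective (h.trans hh.symm))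
    rw [if_pos h, h, Rmat_apply, if_pos rfl, if_neg hne]
  · have hne : σ (ee n (jjf σ k)) ≠ k := fun hh =>
      (ee_ne_oo _ _) (σ.injective (hh.trans h.symm))
    rw [if_neg hne, h, Rmat_apply, if_neg hne, if_pos rfl]

lemma pf_Rmat (A : Matrix (Fin (2 * n)) (Fin (2 * n)) ℝ) (k : Fin (2 * n))
    (v : Fin (2 * n) → ℝ) :
    pfaffian (Rmat A k v) = ∑ σ ∈ pfMatchings n,
      ((Equiv.Perm.sign σ : ℤ) : ℝ) *
        ((if σ (ee n (jjf σ k)) = k then v (σ (oo n (jjf σ k)))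
            else -(v (σ (ee n (jjf σ k))))) *
          ∏ l ∈ Finset.univ.erase (jjf σ k), A (σ (ee n l)) (σ (oo n l))) := by
  rw [pfaffian_eq_sum_T]
  exact Finset.sum_congr rfl fun σ _ => by rw [T, prod_Rmat]

lemma pf_Rmat_linear (A : Matrix (Fin (2 * n)) (Fin (2 * n)) ℝ) (k : Fin (2 * n))
    (v : Fin (2 * n) → ℝ) :
    pfaffian (Rmat A k v) = ∑ b : Fin (2 * n),
      v b * pfaffian (Rmat A k (Pi.single b 1)) := by
  have hswap : ∑ b : Fin (2 * n), v b * pfaffian (Rmat A k (Pi.single b 1))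
      = ∑ σ ∈ pfMatchings n, ∑ b : Fin (2 * n),
          v b * (((Equiv.Perm.sign σ : ℤ) : ℝ) *
            ((if σ (ee n (jjf σ k)) = k then (Pi.single b 1 : Fin (2*n) → ℝ) (σ (oo n (jjf σ k)))
                else -((Pi.single b 1 : Fin (2*n) → ℝ) (σ (ee n (jjf σ k))))) *
              ∏ l ∈ Finset.univ.erase (jjf σ k), A (σ (ee n l)) (σ (oo n l)))) := by
    rw [Finset.sum_comm]
    refine Finset.sum_congr rfl fun b _ => ?_
    rw [pf_Rmat, Finset.mul_sum]
  rw [pf_Rmat, hswap]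
  refine Finset.sum_congr rfl fun σ _ => ?_
  by_cases hc : σ (ee n (jjf σ k)) = k
  · simp only [if_pos hc, Pi.single_apply, mul_ite, ite_mul, mul_zero, zero_mul,
      mul_one, one_mul]
    rw [Finset.sum_ite_eq]
    simp only [Finset.mem_univ, if_true]
    ring
  · simp only [if_neg hc, Pi.single_apply, mul_ite, ite_mul, mul_zero, zero_mul,
      mul_one, mul_neg, neg_mul, one_mul]
    rw [Finset.sum_neg_distrib, Finset.sum_ite_eq]
    simp only [Finset.mem_univ, if_true]
    ring

variable {A C : Matrix (Fin (2 * n)) (Fin (2 * n)) ℝ}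

lemma row_expansion (hA : ∀ a b, A b a = -A a b) (k : Fin (2 * n)) :
    ∑ b : Fin (2 * n), A k b * pfaffian (Rmat A k (Pi.single b 1)) = pfaffian A := by
  rw [← pf_Rmat_linear A k (A k), Rmat_self hA]

lemma Rmat_row_eq (hA : ∀ a b, A b a = -A a b) (i k : Fin (2 * n)) (a b : Fin (2 * n)) :
    Rmat A k (A i) a b = A (if a = k then i else a) (if b = k then i else b) := by
  have hdiag : A i i = 0 := by have := hA i i; linarith
  by_cases hak : a = k <;> by_cases hbk : b = k <;>
    simp [Rmat_apply, hak, hbk, hdiag, hA i a]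

lemma alien_expansion (hA : ∀ a b, A b a = -A a b) {i k : Fin (2 * n)} (hik : i ≠ k) :
    ∑ b : Fin (2 * n), A i b * pfaffian (Rmat A k (Pi.single b 1)) = 0 := by
  rw [← pf_Rmat_linear A k (A i)]
  refine pf_eq_zero (Rmat_anti hA k (A i)) hik ?_
  have haux : ∀ x : Fin (2 * n),
      (if Equiv.swap i k x = k then i else Equiv.swap i k x) =
        (if x = k then i else x) := by
    intro x
    rcases eq_or_ne x i with rfl | hxi
    · rw [Equiv.swap_apply_left, if_pos rfl, if_neg hik]
    · rcases eq_or_ne x k with rfl | hxk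
      · rw [Equiv.swap_apply_right, if_neg hik, if_pos rfl]
      · rw [Equiv.swap_apply_of_ne_of_ne hxi hxk]
  intro a b
  rw [Rmat_row_eq hA, Rmat_row_eq hA, haux a, haux b]

/-- the "Pfaffian adjugate" matrix -/
def Qmat (A : Matrix (Fin (2 * n)) (Fin (2 * n)) ℝ) :
    Matrix (Fin (2 * n)) (Fin (2 * n)) ℝ :=
  Matrix.of fun b k => pfaffian (Rmat A k (Pi.single b 1))

lemma A_mul_Q (hA : ∀ a b, A b a = -A a b) :
    A * Qmat A = pfaffian A • (1 : Matrix (Fin (2 * n)) (Fin (2 * n)) ℝ) := by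
  ext i k
  rw [Matrix.mul_apply]
  simp only [Qmat, Matrix.of_apply]
  by_cases hik : i = k
  · subst hik
    rw [row_expansion hA i]
    simp [Matrix.one_apply]
  · rw [alien_expansion hA hik]
    simp [Matrix.one_apply, hik]

/-- the derivative value -/
def Dval (A C : Matrix (Fin (2 * n)) (Fin (2 * n)) ℝ) : ℝ :=
  ∑ σ ∈ pfMatchings n, ((Equiv.Perm.sign σ : ℤ) : ℝ) *
    ∑ j : Fin n, (∏ l ∈ Finset.univ.erase j, A (σ (ee n l)) (σ (oo n l))) *
      C (σ (ee n j)) (σ (oo n j))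

lemma per_sigma (hC : ∀ a b, C b a = -C a b) (σ : Equiv.Perm (Fin (2 * n))) :
    (∑ k : Fin (2 * n), ((Equiv.Perm.sign σ : ℤ) : ℝ) *
      ((if σ (ee n (jjf σ k)) = k then C k (σ (oo n (jjf σ k)))
          else -(C k (σ (ee n (jjf σ k))))) *
        ∏ l ∈ Finset.univ.erase (jjf σ k), A (σ (ee n l)) (σ (oo n l))))
      = 2 * (((Equiv.Perm.sign σ : ℤ) : ℝ) *
          ∑ j : Fin n, (∏ l ∈ Finset.univ.erase j, A (σ (ee n l)) (σ (oo n l))) *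
            C (σ (ee n j)) (σ (oo n j))) := by
  rw [← Equiv.sum_comp σ (fun k => ((Equiv.Perm.sign σ : ℤ) : ℝ) *
      ((if σ (ee n (jjf σ k)) = k then C k (σ (oo n (jjf σ k)))
          else -(C k (σ (ee n (jjf σ k))))) *
        ∏ l ∈ Finset.univ.erase (jjf σ k), A (σ (ee n l)) (σ (oo n l))))]
  rw [sum_split, Finset.mul_sum, Finset.mul_sum]
  refine Finset.sum_congr rfl fun j _ => ?_
  have hne : σ (ee n j) ≠ σ (oo n j) := fun h => ee_ne_oo j j (σ.injective h)
  rw [jj_apply_ee, jj_apply_oo, if_pos rfl, if_neg hne, hC (σ (ee n j)) (σ (oo n j))]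
  ring

lemma trace_QC (hC : ∀ a b, C b a = -C a b) :
    Matrix.trace (Qmat A * C) = 2 * Dval A C := by
  have h1 : Matrix.trace (Qmat A * C)
      = ∑ k : Fin (2 * n), ∑ b : Fin (2 * n),
          C k b * pfaffian (Rmat A k (Pi.single b 1)) := by
    rw [Matrix.trace]
    simp only [Matrix.diag, Matrix.mul_apply, Qmat, Matrix.of_apply]
    rw [Finset.sum_comm]
    exact Finset.sum_congr rfl fun k _ => Finset.sum_congr rfl fun b _ => mul_comm _ _
  rw [h1]
  have h2 : ∀ k, ∑ b : Fin (2 * n), C k b * pfaffian (Rmat A k (Pi.single b 1))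
      = pfaffian (Rmat A k (C k)) := fun k => (pf_Rmat_linear A k (C k)).symm
  rw [Finset.sum_congr rfl fun k _ => (h2 k).trans (pf_Rmat A k (C k))]
  rw [Finset.sum_comm, Dval, Finset.mul_sum]
  exact Finset.sum_congr rfl fun σ _ => per_sigma hC σ

lemma hasDeriv (A C : Matrix (Fin (2 * n)) (Fin (2 * n)) ℝ) :
    HasDerivAt (fun z : ℝ => pfaffian (A + z • C)) (Dval A C) 0 := by
  have hfun : (fun z : ℝ => pfaffian (A + z • C))
      = fun z : ℝ => ∑ σ ∈ pfMatchings n, ((Equiv.Perm.sign σ : ℤ) : ℝ) *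
          ∏ j : Fin n, (A (σ (ee n j)) (σ (oo n j)) + z * C (σ (ee n j)) (σ (oo n j))) := by
    funext z
    rw [pfaffian_eq_sum_T]
    refine Finset.sum_congr rfl fun σ _ => ?_
    rw [T]
    congr 1
  rw [hfun, Dval]
  refine HasDerivAt.fun_sum fun σ _ => ?_
  refine HasDerivAt.const_mul _ ?_
  have h := HasDerivAt.fun_finsetProd (𝕜 := ℝ) (u := Finset.univ)
    (f := fun j z => A (σ (ee n j)) (σ (oo n j)) + z * C (σ (ee n j)) (σ (oo n j)))
    (f' := fun j => C (σ (ee n j)) (σ (oo n j))) (x := 0)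
    (fun j _ => (hasDerivAt_mul_const _).const_add _)
  simpa using h

end PfAux

theorem deriv_pfaffian_at_zero' (r : ℕ) (A C : Matrix (Fin (2 * r)) (Fin (2 * r)) ℝ)
    (hA : Aᵀ = -A) (hC : Cᵀ = -C) (hAinv : IsUnit A.det) :
    deriv (fun z : ℝ => pfaffian (A + z • C)) 0
      = (1 / 2) * pfaffian A * Matrix.trace (A⁻¹ * C) := by
  have hA' : ∀ a b, A b a = -A a b := fun a b => by
    have := congrFun (congrFun hA a) b
    simpa [Matrix.transpose_apply, Matrix.neg_apply] using this
  have hC' : ∀ a b, C b a = -C a b := fun a b => by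
    have := congrFun (congrFun hC a) b
    simpa [Matrix.transpose_apply, Matrix.neg_apply] using this
  rw [(PfAux.hasDeriv A C).deriv]
  have hQ : PfAux.Qmat A = pfaffian A • A⁻¹ := by
    calc PfAux.Qmat A = (A⁻¹ * A) * PfAux.Qmat A := by
          rw [Matrix.nonsing_inv_mul A hAinv, one_mul]
      _ = A⁻¹ * (A * PfAux.Qmat A) := by rw [Matrix.mul_assoc]
      _ = A⁻¹ * (pfaffian A • 1) := by rw [PfAux.A_mul_Q hA']
      _ = pfaffian A • A⁻¹ := by rw [Matrix.mul_smul, Matrix.mul_one]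
  have htr : Matrix.trace (PfAux.Qmat A * C) = pfaffian A * Matrix.trace (A⁻¹ * C) := by
    rw [hQ, Matrix.smul_mul, Matrix.trace_smul, smul_eq_mul]
  have h2 := PfAux.trace_QC (A := A) hC'
  rw [htr] at h2
  linarith

/-- For antisymmetric `A, C` with `A` invertible, the derivative at `z = 0` of
`z ↦ pf(A + z·C)` equals `(1/2)·pf(A)·tr(A⁻¹·C)`. -/
theorem deriv_pfaffian_at_zero (r : ℕ) (A C : Matrix (Fin (2 * r)) (Fin (2 * r)) ℝ)
    (hA : Aᵀ = -A) (hC : Cᵀ = -C) (hAinv : IsUnit A.det) :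
    deriv (fun z : ℝ => pfaffian (A + z • C)) 0
      = (1 / 2) * pfaffian A * Matrix.trace (A⁻¹ * C) := by
  exact deriv_pfaffian_at_zero' r A C hA hC hAinv
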